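/- Let q > 2 be a natural number, let S be the set of quadruples (a,b,c,d) of integers in {0,…,2q−1} with a − b − c + d ≡ 0 (mod 2q) and let T be the set of such quadruples with a − b − c + d ≢ 0 (mod 2q). For natural numbers x and y, consider the uniform distribution on Sˣ × Tʸ, and let N be the random variable counting the indices i (among the x + y coordinate quadruples) whose floor-lifted quadruple satisfies ⌊a/2⌋ − ⌊b/2⌋ − ⌊c/2⌋ + ⌊d/2⌋ ≡ 0 (mod q). Then the expectation of N equals (3/4)·x + (5/(4(2q−1)))·y. Equivalently, the sum of N over all elements of Sˣ × Tʸ equals ((3/4)x + (5/(4(2q−1)))y)·(8q³)ˣ·(8q³(2q−1))ʸ. -/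

import Mathlib

/-- The finite set of exponent chains of length 4 for circulant size `2q`:
quadruples `(a,b,c,d)` of integers with `0 ≤ a,b,c,d ≤ 2q-1`. -/
noncomputable abbrev expChains (q : ℕ) : Finset (ℤ × ℤ × ℤ × ℤ) :=
  Finset.Icc (0:ℤ) (2 * q - 1) ×ˢ Finset.Icc (0:ℤ) (2 * q - 1) ×ˢ
    Finset.Icc (0:ℤ) (2 * q - 1) ×ˢ Finset.Icc (0:ℤ) (2 * q - 1)

/-- The chain forms a cycle for circulant size `2q`. -/
abbrev isCycle (q : ℕ) (x : ℤ × ℤ × ℤ × ℤ) : Prop :=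
  (x.1 - x.2.1 - x.2.2.1 + x.2.2.2) % (2 * q) = 0

/-- The floor-lifted chain (entries `⌊e/2⌋`) forms a cycle for circulant size `q`. -/
abbrev isFloorCycle (q : ℕ) (x : ℤ × ℤ × ℤ × ℤ) : Prop :=
  (x.1 / 2 - x.2.1 / 2 - x.2.2.1 / 2 + x.2.2.2 / 2) % q = 0


-- unique residue in a window of length m
lemma count_one (m k : ℤ) (hm : 0 < m) :
    ((Finset.Icc 0 (m-1)).filter (fun a => (a + k) % m = 0)).card = 1 := by
  rw [Finset.card_eq_one]
  refine ⟨(-k) % m, ?_⟩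
  ext a
  simp only [Finset.mem_filter, Finset.mem_Icc, Finset.mem_singleton]
  constructor
  · rintro ⟨⟨h0, h1⟩, h2⟩
    have h3 : a % m = (-k) % m := by
      rw [Int.emod_eq_emod_iff_emod_sub_eq_zero]
      have : a - -k = a + k := by ring
      rw [this]; exact h2
    rwa [Int.emod_eq_of_lt h0 (by omega)] at h3
  · rintro rfl
    have hnn := Int.emod_nonneg (-k) (by omega : m ≠ 0)
    have hlt := Int.emod_lt_of_pos (-k) hm
    refine ⟨⟨hnn, by omega⟩, ?_⟩
    rw [Int.emod_add_emod]
    simp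


-- (u % (2q))/2 ≡ u/2  (mod q)
lemma half_emod (q : ℕ) (hq : 0 < q) (u v : ℤ) :
    ((u % (2*(q:ℤ)))/2 - v) % q = (u/2 - v) % q := by
  have h2q : (2*(q:ℤ)) ≠ 0 := by positivity
  have hdef : u % (2*(q:ℤ)) = u + (-(u / (2*q)) * (2*q)) := by
    rw [Int.emod_def]; ring
  rw [hdef]
  have : (u + -(u / (2*(q:ℤ))) * (2*q)) / 2 = u / 2 + -(u / (2*q)) * q := by
    have : (u + -(u / (2*(q:ℤ))) * (2*q)) = u + (-(u / (2*q)) * q) * 2 := by ring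
    rw [this, Int.add_mul_ediv_right _ _ (by norm_num : (2:ℤ) ≠ 0)]
  rw [this]
  have : u / 2 + -(u / (2*(q:ℤ))) * q - v = (u/2 - v) + (-(u / (2*q))) * q := by ring
  rw [this, Int.add_mul_emod_self_right]

lemma count_both (q : ℕ) (hq : 0 < q) (u v : ℤ) :
    ((Finset.Icc (0:ℤ) (2*q-1)).filter
      (fun a => (a - u) % (2*q) = 0 ∧ (a/2 - v) % q = 0)).card
      = if (u/2 - v) % q = 0 then 1 else 0 := by
  have hm : (0:ℤ) < 2*q := by positivity
  have key : ∀ a : ℤ, 0 ≤ a → a ≤ 2*q-1 → ((a - u) % (2*q) = 0 ↔ a = u % (2*q)) := by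
    intro a h0 h1
    constructor
    · intro h
      have h3 : a % (2*(q:ℤ)) = u % (2*q) := by
        rw [Int.emod_eq_emod_iff_emod_sub_eq_zero]; exact h
      rwa [Int.emod_eq_of_lt h0 (by omega)] at h3
    · rintro rfl
      rw [Int.sub_emod, Int.emod_emod_of_dvd _ dvd_rfl]
      simp [Int.sub_emod]
  by_cases hcond : (u/2 - v) % q = 0
  · rw [if_pos hcond, Finset.card_eq_one]
    refine ⟨u % (2*q), ?_⟩
    ext a
    simp only [Finset.mem_filter, Finset.mem_Icc, Finset.mem_singleton]
    constructor
    · rintro ⟨⟨h0, h1⟩, h2, h3⟩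
      exact (key a h0 h1).mp h2
    · rintro rfl
      have hnn := Int.emod_nonneg u (by omega : (2*(q:ℤ)) ≠ 0)
      have hlt := Int.emod_lt_of_pos u hm
      refine ⟨⟨hnn, by omega⟩, (key _ hnn (by omega)).mpr rfl, ?_⟩
      rw [half_emod q hq]; exact hcond
  · rw [if_neg hcond, Finset.card_eq_zero, Finset.filter_eq_empty_iff]
    rintro a ha ⟨h2, h3⟩
    simp only [Finset.mem_Icc] at ha
    rcases ha with ⟨h0, h1⟩
    have := (key a h0 h1).mp h2
    subst this
    rw [half_emod q hq] at h3
    exact hcond h3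

lemma count_floor (q : ℕ) (hq : 0 < q) (k : ℤ) :
    ((Finset.Icc (0:ℤ) (2*q-1)).filter (fun a => (a/2 + k) % q = 0)).card = 2 := by
  have hqz : ((q:ℤ)) ≠ 0 := by exact_mod_cast hq.ne'
  set j : ℤ := (-k) % q with hj
  have hnn := Int.emod_nonneg (-k) hqz
  have hlt := Int.emod_lt_of_pos (-k) (show (0:ℤ) < q by exact_mod_cast hq)
  have hset : ((Finset.Icc (0:ℤ) (2*q-1)).filter (fun a => (a/2 + k) % q = 0))
      = {2*j, 2*j+1} := by
    ext a
    simp only [Finset.mem_filter, Finset.mem_Icc, Finset.mem_insert, Finset.mem_singleton]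
    constructor
    · rintro ⟨⟨h0, h1⟩, h2⟩
      have hmid : a/2 = j := by
        have h3 : (a/2) % q = (-k) % q := by
          rw [Int.emod_eq_emod_iff_emod_sub_eq_zero]
          have : a/2 - -k = a/2 + k := by ring
          rw [this]; exact h2
        rwa [Int.emod_eq_of_lt (by omega) (by omega)] at h3
      omega
    · intro h
      have ha2 : a/2 = j := by omega
      have hb : 0 ≤ a ∧ a ≤ 2*q - 1 := by omega
      refine ⟨⟨hb.1, hb.2⟩, ?_⟩
      rw [ha2, hj, Int.emod_add_emod]
      simp
  rw [hset]
  rw [Finset.card_insert_of_notMem (by simp only [Finset.mem_singleton]; omega), Finset.card_singleton]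


lemma parity_card (q : ℕ) (r : ℤ) (hr0 : 0 ≤ r) (hr1 : r ≤ 1) :
    ((Finset.Icc (0:ℤ) (2*q-1)).filter (fun b => b % 2 = r)).card = q := by
  have : ((Finset.Icc (0:ℤ) (2*q-1)).filter (fun b => b % 2 = r)).card
      = (Finset.Icc (0:ℤ) (q-1)).card := by
    apply Finset.card_bij' (fun b _ => b / 2) (fun j _ => 2*j + r)
    all_goals intro a ha
    all_goals simp only [Finset.mem_filter, Finset.mem_Icc] at ha
    all_goals try simp only [Finset.mem_filter, Finset.mem_Icc]
    all_goals omega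
  rw [this, Int.card_Icc]
  omega

-- sum over window depends only on parity
lemma parity_sum (q : ℕ) (g : ℤ → ℕ) :
    ∑ b ∈ Finset.Icc (0:ℤ) (2*q-1), g (b % 2) = q * (g 0 + g 1) := by
  rw [← Finset.sum_filter_add_sum_filter_not (Finset.Icc (0:ℤ) (2*q-1)) (fun b => b % 2 = 0)]
  have h1 : ∑ b ∈ (Finset.Icc (0:ℤ) (2*q-1)).filter (fun b => b % 2 = 0), g (b % 2)
      = q * g 0 := by
    rw [Finset.sum_congr rfl (fun b hb => by
      simp only [Finset.mem_filter] at hb; rw [hb.2]), Finset.sum_const, smul_eq_mul,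
      parity_card q 0 le_rfl zero_le_one]
  have h2 : ∑ b ∈ (Finset.Icc (0:ℤ) (2*q-1)).filter (fun b => ¬ b % 2 = 0), g (b % 2)
      = q * g 1 := by
    have he : (Finset.Icc (0:ℤ) (2*q-1)).filter (fun b => ¬ b % 2 = 0)
        = (Finset.Icc (0:ℤ) (2*q-1)).filter (fun b => b % 2 = 1) := by
      apply Finset.filter_congr; intro b _; constructor <;> (intro h; omega)
    rw [he, Finset.sum_congr rfl (fun b hb => by
      simp only [Finset.mem_filter] at hb; rw [hb.2]), Finset.sum_const, smul_eq_mul,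
      parity_card q 1 zero_le_one le_rfl]
  rw [h1, h2]; ring

lemma quad_card (q : ℕ) (p : ℤ × ℤ × ℤ × ℤ → Prop) [DecidablePred p] :
    ((expChains q).filter p).card
      = ∑ a ∈ Finset.Icc (0:ℤ) (2*q-1), ∑ b ∈ Finset.Icc (0:ℤ) (2*q-1),
          ∑ c ∈ Finset.Icc (0:ℤ) (2*q-1), ∑ d ∈ Finset.Icc (0:ℤ) (2*q-1),
            if p (a, b, c, d) then 1 else 0 := by
  rw [Finset.card_filter]
  simp only [expChains, Finset.sum_product]

lemma cardN (q : ℕ) : (Finset.Icc (0:ℤ) (2*q-1)).card = 2*q := by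
  rw [Int.card_Icc]; omega

lemma card_expChains (q : ℕ) : (expChains q).card = 16 * q^4 := by
  simp only [expChains, Finset.card_product, cardN]; ring

lemma card_S (q : ℕ) (hq : 0 < q) :
    ((expChains q).filter (fun v => isCycle q v)).card = 8 * q^3 := by
  rw [quad_card]
  have inner : ∀ a b c : ℤ,
      (∑ d ∈ Finset.Icc (0:ℤ) (2*q-1), if isCycle q (a,b,c,d) then 1 else 0) = 1 := by
    intro a b c
    have := count_one (2*q) (a - b - c) (by positivity)
    rw [Finset.card_filter] at this
    rw [← this]
    apply Finset.sum_congr rfl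
    intro d _
    congr 1
    simp only [isCycle, eq_iff_iff]
    constructor <;> (intro h; rw [← h]; ring_nf)
  calc ∑ a ∈ Finset.Icc (0:ℤ) (2*q-1), ∑ b ∈ Finset.Icc (0:ℤ) (2*q-1),
          ∑ c ∈ Finset.Icc (0:ℤ) (2*q-1), ∑ d ∈ Finset.Icc (0:ℤ) (2*q-1),
            (if isCycle q (a,b,c,d) then 1 else 0)
      = ∑ a ∈ Finset.Icc (0:ℤ) (2*q-1), ∑ b ∈ Finset.Icc (0:ℤ) (2*q-1),
          ∑ _c ∈ Finset.Icc (0:ℤ) (2*q-1), 1 := by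
        refine Finset.sum_congr rfl fun a _ => Finset.sum_congr rfl fun b _ =>
          Finset.sum_congr rfl fun c _ => inner a b c
    _ = 8 * q^3 := by
        simp only [Finset.sum_const, smul_eq_mul, mul_one, cardN]; ring

lemma parity_sum3 (q : ℕ) (g : ℤ → ℤ → ℤ → ℕ) :
    ∑ a ∈ Finset.Icc (0:ℤ) (2*q-1), ∑ b ∈ Finset.Icc (0:ℤ) (2*q-1),
      ∑ c ∈ Finset.Icc (0:ℤ) (2*q-1), g (a % 2) (b % 2) (c % 2)
    = q^3 * (g 0 0 0 + g 0 0 1 + g 0 1 0 + g 0 1 1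
             + g 1 0 0 + g 1 0 1 + g 1 1 0 + g 1 1 1) := by
  calc ∑ a ∈ Finset.Icc (0:ℤ) (2*q-1), ∑ b ∈ Finset.Icc (0:ℤ) (2*q-1),
        ∑ c ∈ Finset.Icc (0:ℤ) (2*q-1), g (a % 2) (b % 2) (c % 2)
      = ∑ a ∈ Finset.Icc (0:ℤ) (2*q-1), ∑ b ∈ Finset.Icc (0:ℤ) (2*q-1),
          q * (g (a % 2) (b % 2) 0 + g (a % 2) (b % 2) 1) :=
        Finset.sum_congr rfl fun a _ => Finset.sum_congr rfl fun b _ =>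
          parity_sum q (g (a % 2) (b % 2))
    _ = ∑ a ∈ Finset.Icc (0:ℤ) (2*q-1),
          q * ((q * (g (a % 2) 0 0 + g (a % 2) 0 1))
             + (q * (g (a % 2) 1 0 + g (a % 2) 1 1))) :=
        Finset.sum_congr rfl fun a _ =>
          parity_sum q (fun rb => q * (g (a % 2) rb 0 + g (a % 2) rb 1))
    _ = q * ((q * ((q * (g 0 0 0 + g 0 0 1)) + (q * (g 0 1 0 + g 0 1 1))))
           + (q * ((q * (g 1 0 0 + g 1 0 1)) + (q * (g 1 1 0 + g 1 1 1))))) :=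
        parity_sum q (fun ra => q * ((q * (g ra 0 0 + g ra 0 1))
             + (q * (g ra 1 0 + g ra 1 1))))
    _ = q^3 * (g 0 0 0 + g 0 0 1 + g 0 1 0 + g 0 1 1
             + g 1 0 0 + g 1 0 1 + g 1 1 0 + g 1 1 1) := by ring

lemma card_F (q : ℕ) (hq : 0 < q) :
    ((expChains q).filter (fun v => isFloorCycle q v)).card = 16 * q^3 := by
  rw [quad_card]
  have inner : ∀ a b c : ℤ,
      (∑ d ∈ Finset.Icc (0:ℤ) (2*q-1), if isFloorCycle q (a,b,c,d) then 1 else 0) = 2 := by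
    intro a b c
    have := count_floor q hq (a/2 - b/2 - c/2)
    rw [Finset.card_filter] at this
    rw [← this]
    apply Finset.sum_congr rfl
    intro d _
    congr 1
    simp only [isFloorCycle, eq_iff_iff]
    constructor <;> (intro h; rw [← h]; ring_nf)
  calc ∑ a ∈ Finset.Icc (0:ℤ) (2*q-1), ∑ b ∈ Finset.Icc (0:ℤ) (2*q-1),
          ∑ c ∈ Finset.Icc (0:ℤ) (2*q-1), ∑ d ∈ Finset.Icc (0:ℤ) (2*q-1),
            (if isFloorCycle q (a,b,c,d) then 1 else 0)
      = ∑ a ∈ Finset.Icc (0:ℤ) (2*q-1), ∑ b ∈ Finset.Icc (0:ℤ) (2*q-1),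
          ∑ _c ∈ Finset.Icc (0:ℤ) (2*q-1), 2 := by
        refine Finset.sum_congr rfl fun a _ => Finset.sum_congr rfl fun b _ =>
          Finset.sum_congr rfl fun c _ => inner a b c
    _ = 16 * q^3 := by
        simp only [Finset.sum_const, smul_eq_mul, cardN]; ring

lemma card_SF (q : ℕ) (hq : 1 < q) :
    ((expChains q).filter (fun v => isCycle q v ∧ isFloorCycle q v)).card = 6 * q^3 := by
  have hq0 : 0 < q := by omega
  rw [quad_card]
  have inner : ∀ a b c : ℤ,
      (∑ d ∈ Finset.Icc (0:ℤ) (2*q-1),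
          if isCycle q (a,b,c,d) ∧ isFloorCycle q (a,b,c,d) then 1 else 0)
        = if ((b+c-a)/2 - (b/2+c/2-a/2)) % q = 0 then 1 else 0 := by
    intro a b c
    have := count_both q hq0 (b+c-a) (b/2+c/2-a/2)
    rw [Finset.card_filter] at this
    rw [← this]
    apply Finset.sum_congr rfl
    intro d _
    congr 1
    simp only [isCycle, isFloorCycle, eq_iff_iff]
    constructor
    · rintro ⟨h1, h2⟩
      constructor
      · rw [← h1]; ring_nf
      · rw [← h2]; ring_nf
    · rintro ⟨h1, h2⟩
      constructor
      · rw [← h1]; ring_nf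
      · rw [← h2]; ring_nf
  have hiff : ∀ a b c : ℤ, (((b+c-a)/2 - (b/2+c/2-a/2)) % q = 0)
      ↔ (b % 2 + c % 2 - a % 2 = 0 ∨ b % 2 + c % 2 - a % 2 = 1) := by
    intro a b c
    have hq' : (1:ℤ) < q := by exact_mod_cast hq
    constructor
    · intro h
      have hd : (q:ℤ) ∣ ((b+c-a)/2 - (b/2+c/2-a/2)) := Int.dvd_of_emod_eq_zero h
      have h0 : ((b+c-a)/2 - (b/2+c/2-a/2)) = 0 :=
        Int.eq_zero_of_abs_lt_dvd hd (abs_lt.mpr ⟨by omega, by omega⟩)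
      omega
    · intro h
      have h0 : ((b+c-a)/2 - (b/2+c/2-a/2)) = 0 := by omega
      rw [h0, Int.zero_emod]
  calc ∑ a ∈ Finset.Icc (0:ℤ) (2*q-1), ∑ b ∈ Finset.Icc (0:ℤ) (2*q-1),
          ∑ c ∈ Finset.Icc (0:ℤ) (2*q-1), ∑ d ∈ Finset.Icc (0:ℤ) (2*q-1),
            (if isCycle q (a,b,c,d) ∧ isFloorCycle q (a,b,c,d) then 1 else 0)
      = ∑ a ∈ Finset.Icc (0:ℤ) (2*q-1), ∑ b ∈ Finset.Icc (0:ℤ) (2*q-1),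
          ∑ c ∈ Finset.Icc (0:ℤ) (2*q-1),
            (if b % 2 + c % 2 - a % 2 = 0 ∨ b % 2 + c % 2 - a % 2 = 1 then 1 else 0) := by
        refine Finset.sum_congr rfl fun a _ => Finset.sum_congr rfl fun b _ =>
          Finset.sum_congr rfl fun c _ => ?_
        rw [inner a b c]
        congr 1
        rw [eq_iff_iff]
        exact hiff a b c
    _ = 6 * q^3 := by
        rw [parity_sum3 q (fun ra rb rc => if rb + rc - ra = 0 ∨ rb + rc - ra = 1 then 1 else 0)]
        norm_num
        ring

lemma card_T (q : ℕ) (hq : 0 < q) :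
    ((expChains q).filter (fun v => ¬ isCycle q v)).card = 8 * q^3 * (2*q - 1) := by
  have h := Finset.card_filter_add_card_filter_not
    (s := expChains q) (p := fun v => isCycle q v)
  rw [card_S q hq, card_expChains] at h
  obtain ⟨q', rfl⟩ : ∃ q', q = q' + 1 := ⟨q - 1, by omega⟩
  have h1 : 2 * (q' + 1) - 1 = 2 * q' + 1 := by omega
  rw [h1]
  have h2 : 8 * (q'+1)^3 * (2*q'+1) + 8 * (q'+1)^3 = 16 * (q'+1)^4 := by ring
  omega

lemma card_TF (q : ℕ) (hq : 1 < q) :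
    ((expChains q).filter (fun v => (¬ isCycle q v) ∧ isFloorCycle q v)).card
      = 10 * q^3 := by
  have hq0 : 0 < q := by omega
  have h := Finset.card_filter_add_card_filter_not
    (s := (expChains q).filter (fun v => isFloorCycle q v)) (p := fun v => isCycle q v)
  rw [Finset.filter_filter, Finset.filter_filter, card_F q hq0] at h
  have e1 : ((expChains q).filter (fun v => isFloorCycle q v ∧ isCycle q v)).card
      = 6 * q^3 := by
    rw [← card_SF q hq]
    congr 1
    apply Finset.filter_congr
    intro v _
    exact and_comm
  have e2 : ((expChains q).filter (fun v => isFloorCycle q v ∧ ¬ isCycle q v))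
      = ((expChains q).filter (fun v => (¬ isCycle q v) ∧ isFloorCycle q v)) := by
    apply Finset.filter_congr
    intro v _
    exact and_comm
  rw [e1, e2] at h
  omega

section Pi
variable {α : Type*} [DecidableEq α]

lemma card_pi_fix (x : ℕ) (S : Finset α) (i : Fin x) (v : α) (hv : v ∈ S) :
    ((Fintype.piFinset (fun _ : Fin x => S)).filter (fun f => f i = v)).card
      = S.card ^ (x - 1) := by
  have hset : ((Fintype.piFinset (fun _ : Fin x => S)).filter (fun f => f i = v))
      = Fintype.piFinset (fun j => if j = i then ({v} : Finset α) else S) := by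
    ext f
    simp only [Finset.mem_filter, Fintype.mem_piFinset]
    constructor
    · rintro ⟨hf, hfi⟩ j
      by_cases h : j = i
      · subst h; simp [hfi]
      · simp [h, hf j]
    · intro h
      have hfi : f i = v := by have := h i; simpa using this
      refine ⟨fun j => ?_, hfi⟩
      by_cases hji : j = i
      · subst hji; rw [hfi]; exact hv
      · have := h j; rwa [if_neg hji] at this
  rw [hset, Fintype.card_piFinset]
  have : ∀ j : Fin x, (if j = i then ({v} : Finset α) else S).card
      = if j = i then 1 else S.card := by
    intro j; by_cases h : j = i <;> simp [h]
  rw [Finset.prod_congr rfl (fun j _ => this j)]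
  rw [← Finset.mul_prod_erase Finset.univ _ (Finset.mem_univ i), if_pos rfl, one_mul]
  rw [Finset.prod_congr rfl (fun j hj => if_neg (Finset.ne_of_mem_erase hj)),
    Finset.prod_const, Finset.card_erase_of_mem (Finset.mem_univ i), Finset.card_univ,
    Fintype.card_fin]

lemma sum_pi_coord (x : ℕ) (S : Finset α) (i : Fin x) (g : α → ℕ) :
    ∑ f ∈ Fintype.piFinset (fun _ : Fin x => S), g (f i)
      = (∑ v ∈ S, g v) * S.card ^ (x - 1) := by
  have step1 : ∀ f ∈ Fintype.piFinset (fun _ : Fin x => S),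
      g (f i) = ∑ v ∈ S, if v = f i then g v else 0 := by
    intro f hf
    rw [Finset.sum_ite_eq' S (f i) g, if_pos]
    exact Fintype.mem_piFinset.mp hf i
  rw [Finset.sum_congr rfl step1, Finset.sum_comm]
  have step2 : ∀ v ∈ S,
      (∑ f ∈ Fintype.piFinset (fun _ : Fin x => S), if v = f i then g v else 0)
        = g v * S.card ^ (x - 1) := by
    intro v hv
    have h3 : ∑ f ∈ Fintype.piFinset (fun _ : Fin x => S), (if v = f i then g v else 0)
        = ∑ f ∈ (Fintype.piFinset (fun _ : Fin x => S)).filter (fun f => f i = v), g v := by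
      rw [Finset.sum_filter]
      apply Finset.sum_congr rfl
      intro f _
      congr 1
      simp [eq_comm]
    rw [h3, Finset.sum_const, smul_eq_mul, card_pi_fix x S i v hv, mul_comm]
  rw [Finset.sum_congr rfl step2, Finset.sum_mul]
  
lemma sum_pi_count (x : ℕ) (S : Finset α) (P : α → Prop) [DecidablePred P] :
    ∑ f ∈ Fintype.piFinset (fun _ : Fin x => S),
        (Finset.univ.filter (fun i : Fin x => P (f i))).card
      = x * (S.filter P).card * S.card ^ (x - 1) := by
  have h1 : ∀ f : Fin x → α, (Finset.univ.filter (fun i : Fin x => P (f i))).card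
      = ∑ i : Fin x, if P (f i) then 1 else 0 := by
    intro f; rw [Finset.card_filter]
  rw [Finset.sum_congr rfl (fun f _ => h1 f), Finset.sum_comm]
  have h2 : ∀ i : Fin x,
      ∑ f ∈ Fintype.piFinset (fun _ : Fin x => S), (if P (f i) then 1 else 0)
        = (S.filter P).card * S.card ^ (x - 1) := by
    intro i
    rw [sum_pi_coord x S i (fun v => if P v then 1 else 0)]
    congr 1
    rw [Finset.card_filter]
  rw [Finset.sum_congr rfl (fun i _ => h2 i), Finset.sum_const, smul_eq_mul,
    Finset.card_univ, Fintype.card_fin, mul_assoc]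

end Pi

/-- Expected number of 4-cycles after floor lifting: over the uniform distribution on
`Sˣ × Tʸ` (where `S` = chains forming a cycle, `T` = chains not forming a cycle),
the sum of the number `N` of coordinates whose floor lift forms a cycle equals
`((3/4)x + (5/(4(2q-1)))y) · |S|ˣ · |T|ʸ` with `|S| = 8q³`, `|T| = 8q³(2q-1)`. -/
theorem stmt_4 (q : ℕ) (hq : 2 < q) (x y : ℕ) :
    ∑ f ∈ Fintype.piFinset
        (fun _ : Fin x => (expChains q).filter (fun v => isCycle q v)),
      ∑ g ∈ Fintype.piFinset
          (fun _ : Fin y => (expChains q).filter (fun v => ¬ isCycle q v)),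
        (((Finset.univ.filter (fun i : Fin x => isFloorCycle q (f i))).card +
          (Finset.univ.filter (fun j : Fin y => isFloorCycle q (g j))).card : ℕ) : ℚ) =
      ((3 / 4) * x + (5 / (4 * (2 * q - 1))) * y) *
        (8 * q ^ 3 : ℚ) ^ x * (8 * q ^ 3 * (2 * q - 1) : ℚ) ^ y := by
  classical
  obtain ⟨q', rfl⟩ : ∃ q', q = q' + 3 := ⟨q - 3, by omega⟩
  have hq0 : 0 < (q' + 3) := by omega
  have hq1 : 1 < (q' + 3) := by omega
  set S := (expChains (q' + 3)).filter (fun v => isCycle (q' + 3) v) with hS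
  set T := (expChains (q' + 3)).filter (fun v => ¬ isCycle (q' + 3) v) with hT
  have hSc : S.card = 8*(q' + 3)^3 := card_S (q' + 3) hq0
  have hTc : T.card = 8*(q' + 3)^3*(2*(q' + 3)-1) := card_T (q' + 3) hq0
  have hSF : (S.filter (fun v => isFloorCycle (q' + 3) v)).card = 6*(q' + 3)^3 := by
    rw [hS, Finset.filter_filter]; exact card_SF (q' + 3) hq1
  have hTF : (T.filter (fun v => isFloorCycle (q' + 3) v)).card = 10*(q' + 3)^3 := by
    rw [hT, Finset.filter_filter]; exact card_TF (q' + 3) hq1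
  have hPS : (Fintype.piFinset (fun _ : Fin x => S)).card = (8*(q' + 3)^3)^x := by
    rw [Fintype.card_piFinset]
    simp [hSc]
  have hPT : (Fintype.piFinset (fun _ : Fin y => T)).card = (8*(q' + 3)^3*(2*(q' + 3)-1))^y := by
    rw [Fintype.card_piFinset]
    simp [hTc]
  have hDouble : (∑ f ∈ Fintype.piFinset (fun _ : Fin x => S),
      ∑ g ∈ Fintype.piFinset (fun _ : Fin y => T),
        ((Finset.univ.filter (fun i : Fin x => isFloorCycle (q' + 3) (f i))).card +
          (Finset.univ.filter (fun j : Fin y => isFloorCycle (q' + 3) (g j))).card))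
      = (8*(q' + 3)^3*(2*(q' + 3)-1))^y * (x * (6*(q' + 3)^3) * (8*(q' + 3)^3)^(x-1))
        + (8*(q' + 3)^3)^x * (y * (10*(q' + 3)^3) * (8*(q' + 3)^3*(2*(q' + 3)-1))^(y-1)) := by
    have h1 : ∀ f : Fin x → ℤ × ℤ × ℤ × ℤ,
        ∑ g ∈ Fintype.piFinset (fun _ : Fin y => T),
          ((Finset.univ.filter (fun i : Fin x => isFloorCycle (q' + 3) (f i))).card +
            (Finset.univ.filter (fun j : Fin y => isFloorCycle (q' + 3) (g j))).card)
        = (Fintype.piFinset (fun _ : Fin y => T)).card *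
            (Finset.univ.filter (fun i : Fin x => isFloorCycle (q' + 3) (f i))).card
          + ∑ g ∈ Fintype.piFinset (fun _ : Fin y => T),
              (Finset.univ.filter (fun j : Fin y => isFloorCycle (q' + 3) (g j))).card := by
      intro f
      rw [Finset.sum_add_distrib, Finset.sum_const, smul_eq_mul]
    rw [Finset.sum_congr rfl (fun f _ => h1 f), Finset.sum_add_distrib,
      Finset.sum_const, smul_eq_mul, ← Finset.mul_sum,
      sum_pi_count x S (fun v => isFloorCycle (q' + 3) v),
      sum_pi_count y T (fun v => isFloorCycle (q' + 3) v),
      hPS, hPT, hSF, hTF, hSc, hTc]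
  have hcast : (∑ f ∈ Fintype.piFinset
        (fun _ : Fin x => (expChains (q' + 3)).filter (fun v => isCycle (q' + 3) v)),
      ∑ g ∈ Fintype.piFinset
          (fun _ : Fin y => (expChains (q' + 3)).filter (fun v => ¬ isCycle (q' + 3) v)),
        (((Finset.univ.filter (fun i : Fin x => isFloorCycle (q' + 3) (f i))).card +
          (Finset.univ.filter (fun j : Fin y => isFloorCycle (q' + 3) (g j))).card : ℕ) : ℚ))
      = ((∑ f ∈ Fintype.piFinset (fun _ : Fin x => S),
      ∑ g ∈ Fintype.piFinset (fun _ : Fin y => T),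
        ((Finset.univ.filter (fun i : Fin x => isFloorCycle (q' + 3) (f i))).card +
          (Finset.univ.filter (fun j : Fin y => isFloorCycle (q' + 3) (g j))).card) : ℕ) : ℚ) := by
    push_cast
    rfl
  rw [hcast, hDouble]
  clear hcast hDouble hPS hPT hSF hTF hSc hTc hS hT
  have h2q : 2 * (q' + 3) - 1 = 2 * q' + 5 := by omega
  rw [h2q]
  have hnn : (0:ℚ) ≤ (q':ℚ) := Nat.cast_nonneg _
  have hne : (2 * ((q':ℚ) + 3) - 1) ≠ 0 := by
    have h : (0:ℚ) < 2 * ((q':ℚ) + 3) - 1 := by linarith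
    exact h.ne'
  rcases x with _ | x' <;> rcases y with _ | y' <;>
    · push_cast
      simp only [Nat.succ_sub_one, pow_succ]
      have hne' : ((q':ℚ) + 3) * 2 - 1 ≠ 0 := by linarith
      field_simp
      try ring
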